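/- arXiv:1810.12003 — 2 statements merged into one kernel-verified Lean document; each statement's English description precedes it below -/
import Mathlib

section
/- For the indicator function 1_U of a finite nonempty subset U ⊂ V, one has ‖√(Γ(1_U))‖_{ℓ¹_m} ≤ √(2 D_ω) · |∂U|, where D_ω = sup_x sup_{y∼x} m(x)/ω_{xy} < ∞ and |∂U| = Σ_{x∈U, y∉U} ω_{xy}. -/
open Real Filter Topology
open scoped BigOperators

/-- Graph Laplacian: `Δ f x = (1/m x) * Σ_y ω x y * (f y - f x)`. -/
noncomputable def lapOp {V : Type*} (m : V → ℝ) (ω : V → V → ℝ) (f : V → ℝ) (x : V) : ℝ :=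
  (1 / m x) * ∑' y, ω x y * (f y - f x)

/-- Carré du champ: `Γ(f,g)(x) = (1/(2 m x)) * Σ_y ω x y (f y - f x)(g y - g x)`. -/
noncomputable def gamOp {V : Type*} (m : V → ℝ) (ω : V → V → ℝ) (f g : V → ℝ) (x : V) : ℝ :=
  (1 / (2 * m x)) * ∑' y, ω x y * (f y - f x) * (g y - g x)

/-- Iterated carré du champ: `Γ₂(f) = (1/2) Δ Γ(f) - Γ(f, Δ f)`. -/
noncomputable def gam2Op {V : Type*} (m : V → ℝ) (ω : V → V → ℝ) (f : V → ℝ) (x : V) : ℝ :=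
  (1 / 2) * lapOp m ω (fun z => gamOp m ω f f z) x - gamOp m ω f (lapOp m ω f) x

/-- Local finiteness: every vertex has finitely many neighbours. -/
def LocallyFiniteGraph {V : Type*} (ω : V → V → ℝ) : Prop :=
  ∀ x, (Function.support fun y => ω x y).Finite

/-- Assumption (A): either the Laplacian is bounded on ℓ²_m
(equivalently `sup_x deg x / m x < ∞`), or the graph is complete with
non-degenerate measure. -/
def AssumptionA {V : Type*} (m : V → ℝ) (ω : V → V → ℝ) : Prop :=
  (∃ C : ℝ, ∀ x, (∑' y, ω x y) / m x ≤ C) ∨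
  ((∃ η : ℕ → V → ℝ,
      (∀ k, (Function.support (η k)).Finite) ∧
      (∀ k x, η k x ≤ η (k + 1) x) ∧
      (∀ x, Tendsto (fun k => η k x) atTop (𝓝 1)) ∧
      (∀ k : ℕ, 1 ≤ k → ∀ x, gamOp m ω (η k) (η k) x ≤ 1 / (k : ℝ))) ∧
    (∃ δ : ℝ, 0 < δ ∧ ∀ x, δ ≤ m x))

/-- Volume of a set of vertices. -/
noncomputable def volSet {V : Type*} (m : V → ℝ) (U : Set V) : ℝ :=
  ∑' x, Set.indicator U m x

/-- Volume of the edge boundary `|∂U| = Σ_{x∈U, y∉U} ω x y`. -/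
noncomputable def bdrySet {V : Type*} (ω : V → V → ℝ) (U : Set V) : ℝ :=
  ∑' x, Set.indicator U (fun x => ∑' y, Set.indicator Uᶜ (fun y => ω x y) y) x


/-- ℓ¹-bound on √Γ of an indicator by the boundary volume. -/
theorem sqrt_gamma_indicator_le {V : Type*} (m : V → ℝ) (ω : V → V → ℝ)
    (hm : ∀ x, 0 < m x) (hnn : ∀ x y, 0 ≤ ω x y) (hsymm : ∀ x y, ω x y = ω y x)
    (hloc : LocallyFiniteGraph ω)
    (U : Set V) (hUfin : U.Finite) (hUne : U.Nonempty)
    (Dω : ℝ) (hDω : ∀ x y, ω x y ≠ 0 → m x ≤ Dω * ω x y) :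
    ∑' x, m x * Real.sqrt
        (gamOp m ω (Set.indicator U fun _ => (1:ℝ)) (Set.indicator U fun _ => (1:ℝ)) x)
      ≤ Real.sqrt (2 * Dω) * bdrySet ω U := by

  classical
  set f : V → ℝ := Set.indicator U fun _ => (1:ℝ) with hf
  set U' : Finset V := hUfin.toFinset with hU'
  set F : Finset V := U' ∪ U'.biUnion (fun y => (hloc y).toFinset) with hF
  have hmemN : ∀ x y : V, y ∈ (hloc x).toFinset ↔ ω x y ≠ 0 := by
    intro x y; simp [Function.mem_support]
  have hmemU' : ∀ x, x ∈ U' ↔ x ∈ U := by intro x; simp [hU']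
  have hU'F : U' ⊆ F := Finset.subset_union_left
  have hNF : ∀ x, x ∈ U → (hloc x).toFinset ⊆ F := by
    intro x hx
    refine Finset.Subset.trans ?_ Finset.subset_union_right
    intro y hy
    exact Finset.mem_biUnion.2 ⟨x, (hmemU' x).2 hx, hy⟩
  -- f values
  have hfd : ∀ x y : V, x ∈ U → y ∈ U → f y - f x = 0 := by
    intro x y hx hy; simp [hf, Set.indicator_of_mem, hx, hy]
  have hfd' : ∀ x y : V, x ∉ U → y ∉ U → f y - f x = 0 := by
    intro x y hx hy; simp [hf, Set.indicator_of_notMem, hx, hy]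
  have hfd1 : ∀ x y : V, x ∈ U → y ∉ U → (f y - f x) * (f y - f x) = 1 := by
    intro x y hx hy; simp [hf, Set.indicator_of_mem, Set.indicator_of_notMem, hx, hy]
  have hfd1' : ∀ x y : V, x ∉ U → y ∈ U → (f y - f x) * (f y - f x) = 1 := by
    intro x y hx hy; simp [hf, Set.indicator_of_mem, Set.indicator_of_notMem, hx, hy]
  set T : V → V → ℝ := fun x y => ω x y * (f y - f x) * (f y - f x) with hT
  set S : V → ℝ := fun x => ∑ y ∈ (hloc x).toFinset, T x y with hS
  have hTnn : ∀ x y, 0 ≤ T x y := by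
    intro x y
    have h1 := hnn x y
    have h2 := mul_self_nonneg (f y - f x)
    calc (0:ℝ) ≤ ω x y * ((f y - f x) * (f y - f x)) := mul_nonneg h1 h2
      _ = T x y := by rw [hT]; ring
  have hSnn : ∀ x, 0 ≤ S x := fun x => Finset.sum_nonneg fun y _ => hTnn x y
  have htsumS : ∀ x, (∑' y, ω x y * (f y - f x) * (f y - f x)) = S x := by
    intro x
    apply tsum_eq_sum
    intro y hy
    have h0 : ω x y = 0 := by
      by_contra h; exact hy ((hmemN x y).2 h)
    simp [h0]
  have hgam : ∀ x, gamOp m ω f f x = (1 / (2 * m x)) * S x := by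
    intro x; rw [gamOp, htsumS]
  have hgamnn : ∀ x, 0 ≤ gamOp m ω f f x := by
    intro x; rw [hgam x]
    have := hm x
    exact mul_nonneg (by positivity) (hSnn x)
  -- pointwise bound
  have key : ∀ x, m x * Real.sqrt (gamOp m ω f f x) ≤ Real.sqrt (Dω / 2) * S x := by
    intro x
    rcases (hSnn x).eq_or_lt with h0 | hpos
    · rw [hgam x, ← h0]; simp
    · obtain ⟨y, hy, hyne⟩ := Finset.exists_ne_zero_of_sum_ne_zero hpos.ne'
      have hω : ω x y ≠ 0 := by
        intro h; apply hyne; simp [hT, h]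
      have hωpos : 0 < ω x y := (hnn x y).lt_of_ne (Ne.symm hω)
      have hmx := hDω x y hω
      have hDpos : 0 < Dω := by nlinarith [hm x]
      have hterm : T x y ≤ S x := Finset.single_le_sum (fun z _ => hTnn x z) hy
      have hdsq : (f y - f x) * (f y - f x) = 1 := by
        by_cases hx : x ∈ U <;> by_cases hyU : y ∈ U
        · exact absurd (by simp [hT, hfd x y hx hyU]) hyne
        · exact hfd1 x y hx hyU
        · exact hfd1' x y hx hyU
        · exact absurd (by simp [hT, hfd' x y hx hyU]) hyne
      have hωS : ω x y ≤ S x := by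
        have : T x y = ω x y := by rw [hT]; simp only; rw [mul_assoc, hdsq, mul_one]
        linarith [hterm]
      have hkey2 : m x ≤ Dω * S x := le_trans hmx (by nlinarith)
      have hgx : 0 ≤ m x * Real.sqrt (gamOp m ω f f x) :=
        mul_nonneg (hm x).le (Real.sqrt_nonneg _)
      have hrhs : 0 ≤ Real.sqrt (Dω / 2) * S x :=
        mul_nonneg (Real.sqrt_nonneg _) (hSnn x)
      have hsq : (m x * Real.sqrt (gamOp m ω f f x)) ^ 2 ≤ (Real.sqrt (Dω / 2) * S x) ^ 2 := by
        rw [mul_pow, mul_pow, Real.sq_sqrt (hgamnn x),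
          Real.sq_sqrt (by positivity : (0:ℝ) ≤ Dω / 2), hgam x]
        have hmne : m x ≠ 0 := (hm x).ne'
        have e : m x ^ 2 * (1 / (2 * m x) * S x) = m x * S x / 2 := by
          field_simp
        rw [e]
        nlinarith [hkey2, hSnn x, hm x]
      have := Real.sqrt_le_sqrt hsq
      rwa [Real.sqrt_sq hgx, Real.sqrt_sq hrhs] at this
  -- support of LHS
  have hFsupp : ∀ x, x ∉ F → m x * Real.sqrt (gamOp m ω f f x) = 0 := by
    intro x hx
    have hxU : x ∉ U := fun h => hx (hU'F ((hmemU' x).2 h))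
    have hS0 : S x = 0 := by
      apply Finset.sum_eq_zero
      intro y hy
      by_cases hyU : y ∈ U
      · have hω0 : ω y x = 0 := by
          by_contra h
          exact hx (Finset.mem_union_right _
            (Finset.mem_biUnion.2 ⟨y, (hmemU' y).2 hyU, (hmemN y x).2 h⟩))
        have : ω x y = 0 := by rw [hsymm]; exact hω0
        simp [hT, this]
      · simp [hT, hfd' x y hxU hyU]
    rw [hgam x, hS0]; simp
  have hLHS : (∑' x, m x * Real.sqrt (gamOp m ω f f x))
      = ∑ x ∈ F, m x * Real.sqrt (gamOp m ω f f x) :=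
    tsum_eq_sum fun x hx => hFsupp x hx
  -- S as sum over F
  have hSF : ∀ x ∈ F, S x = ∑ y ∈ F, T x y := by
    intro x _
    have h1 : S x = ∑ y ∈ (hloc x).toFinset ∪ F, T x y := by
      apply Finset.sum_subset Finset.subset_union_left
      intro y _ hy
      have h0 : ω x y = 0 := by
        by_contra h; exact hy ((hmemN x y).2 h)
      simp [hT, h0]
    have h2 : (∑ y ∈ F, T x y) = ∑ y ∈ (hloc x).toFinset ∪ F, T x y := by
      apply Finset.sum_subset Finset.subset_union_right
      intro y hy hyF
      have hyU : y ∉ U := fun h => hyF (hU'F ((hmemU' y).2 h))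
      by_cases hx : x ∈ U
      · rcases Finset.mem_union.1 hy with h | h
        · exact absurd (hNF x hx h) hyF
        · exact absurd h hyF
      · simp [hT, hfd' x y hx hyU]
    rw [h1, h2]
  set A : V → V → ℝ := fun x y => if x ∈ U ∧ y ∉ U then ω x y else 0 with hA
  have hTA : ∀ x y, T x y = A x y + A y x := by
    intro x y
    by_cases hx : x ∈ U <;> by_cases hy : y ∈ U
    · simp [hT, hA, hfd x y hx hy, hx, hy]
    · have := hfd1 x y hx hy
      simp only [hT, hA, hx, hy]
      rw [mul_assoc, this]; simp
    · have := hfd1' x y hx hy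
      simp only [hT, hA, hx, hy]
      rw [mul_assoc, this, hsymm x y]; simp
    · simp [hT, hA, hfd' x y hx hy, hx, hy]
  -- boundary as finite sum
  have hBx : ∀ x ∈ U', (∑' y, Set.indicator Uᶜ (fun y => ω x y) y) = ∑ y ∈ F, A x y := by
    intro x hx
    have hxU : x ∈ U := (hmemU' x).1 hx
    have hAi : ∀ y, Set.indicator Uᶜ (fun y => ω x y) y = A x y := by
      intro y
      by_cases hy : y ∈ U
      · simp [hA, Set.indicator_of_notMem, hy, hxU]
      · simp [hA, Set.indicator_of_mem, hy, hxU]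
    calc (∑' y, Set.indicator Uᶜ (fun y => ω x y) y)
        = ∑ y ∈ (hloc x).toFinset, Set.indicator Uᶜ (fun y => ω x y) y := by
          apply tsum_eq_sum
          intro y hy
          have h0 : ω x y = 0 := by
            by_contra h; exact hy ((hmemN x y).2 h)
          simp [Set.indicator_apply, h0]
      _ = ∑ y ∈ (hloc x).toFinset, A x y := Finset.sum_congr rfl fun y _ => hAi y
      _ = ∑ y ∈ F, A x y := by
          apply Finset.sum_subset (hNF x hxU)
          intro y _ hy
          have h0 : ω x y = 0 := by
            by_contra h; exact hy ((hmemN x y).2 h)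
          simp [hA, h0]
  have hbdry : bdrySet ω U = ∑ x ∈ U', ∑ y ∈ F, A x y := by
    rw [bdrySet]
    rw [tsum_eq_sum (s := U') (fun x hx => by
      have hxU : x ∉ U := fun h => hx ((hmemU' x).2 h)
      exact Set.indicator_of_notMem hxU _)]
    refine Finset.sum_congr rfl fun x hx => ?_
    rw [Set.indicator_of_mem ((hmemU' x).1 hx), hBx x hx]
  have hdouble : (∑ x ∈ F, S x) = 2 * bdrySet ω U := by
    have h1 : (∑ x ∈ F, S x) = ∑ x ∈ F, ∑ y ∈ F, T x y :=
      Finset.sum_congr rfl hSF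
    have h2 : (∑ x ∈ F, ∑ y ∈ F, T x y)
        = (∑ x ∈ F, ∑ y ∈ F, A x y) + ∑ x ∈ F, ∑ y ∈ F, A y x := by
      rw [← Finset.sum_add_distrib]
      refine Finset.sum_congr rfl fun x _ => ?_
      rw [← Finset.sum_add_distrib]
      exact Finset.sum_congr rfl fun y _ => hTA x y
    have h3 : (∑ x ∈ F, ∑ y ∈ F, A y x) = ∑ x ∈ F, ∑ y ∈ F, A x y :=
      Finset.sum_comm
    have h4 : (∑ x ∈ F, ∑ y ∈ F, A x y) = ∑ x ∈ U', ∑ y ∈ F, A x y := by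
      symm
      apply Finset.sum_subset hU'F
      intro x _ hx
      have hxU : x ∉ U := fun h => hx ((hmemU' x).2 h)
      apply Finset.sum_eq_zero
      intro y _
      simp [hA, hxU]
    rw [h1, h2, h3, h4, hbdry]; ring
  -- put together
  have hsqrt2 : Real.sqrt (Dω / 2) * 2 = Real.sqrt (2 * Dω) := by
    have h4 : Real.sqrt 4 = 2 := by
      rw [show (4:ℝ) = 2 ^ 2 by norm_num, Real.sqrt_sq (by norm_num : (0:ℝ) ≤ 2)]
    rw [show (2:ℝ) * Dω = Dω / 2 * 4 by ring,
      Real.sqrt_mul' _ (by norm_num : (0:ℝ) ≤ 4), h4]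
  calc (∑' x, m x * Real.sqrt (gamOp m ω f f x))
      = ∑ x ∈ F, m x * Real.sqrt (gamOp m ω f f x) := hLHS
    _ ≤ ∑ x ∈ F, Real.sqrt (Dω / 2) * S x := Finset.sum_le_sum fun x _ => key x
    _ = Real.sqrt (Dω / 2) * ∑ x ∈ F, S x := by rw [Finset.mul_sum]
    _ = Real.sqrt (Dω / 2) * (2 * bdrySet ω U) := by rw [hdouble]
    _ = Real.sqrt (2 * Dω) * bdrySet ω U := by rw [← hsqrt2]; ring
end

section
/- Let U ⊂ V be a finite nonempty set and suppose ⟨P_t 1_U, 1_U⟩ ≤ e^{−λt}|U| where |U| = Σ_{x∈U} m(x). If additionally Σ_x m(x)P_t 1_U(x) = |U|, then ‖1_U − P_t 1_U‖_{ℓ¹_m} ≥ 2(1 − e^{−λt})|U|. -/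
open Real Filter Topology
open scoped BigOperators

/-- lower bound on the ℓ¹-distance between an indicator and its evolution. -/
theorem indicator_heat_lower_bound {V : Type*} (m : V → ℝ) (hm : ∀ x, 0 < m x)
    (U : Set V) (hUfin : U.Finite) (hUne : U.Nonempty)
    (P : ℝ → (V → ℝ) → V → ℝ) (t lam : ℝ) (ht : 0 ≤ t) (hlam : 0 ≤ lam)
    (hpos : ∀ x, 0 ≤ P t (Set.indicator U fun _ => (1:ℝ)) x)
    (hle1 : ∀ x, P t (Set.indicator U fun _ => (1:ℝ)) x ≤ 1)
    (hDGG : ∑' x, m x * P t (Set.indicator U fun _ => (1:ℝ)) x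
              * Set.indicator U (fun _ => (1:ℝ)) x
            ≤ Real.exp (-lam * t) * volSet m U)
    (hmass : ∑' x, m x * P t (Set.indicator U fun _ => (1:ℝ)) x = volSet m U) :
    ∑' x, m x * |Set.indicator U (fun _ => (1:ℝ)) x
        - P t (Set.indicator U fun _ => (1:ℝ)) x|
      ≥ 2 * (1 - Real.exp (-lam * t)) * volSet m U := by
  classical
  set one : V → ℝ := Set.indicator U fun _ => (1:ℝ) with hone
  set u : V → ℝ := P t one with hu
  have hone_mem : ∀ x ∈ U, one x = 1 := fun x hx => Set.indicator_of_mem hx _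
  have hone_nmem : ∀ x ∉ U, one x = 0 := fun x hx => Set.indicator_of_notMem hx _
  -- volume is positive
  have hvol : volSet m U = ∑ x ∈ hUfin.toFinset, m x := by
    unfold volSet
    rw [tsum_eq_sum (s := hUfin.toFinset)
      (fun x hx => Set.indicator_of_notMem (by simpa using hx) _)]
    exact Finset.sum_congr rfl fun x hx => Set.indicator_of_mem (by simpa using hx) _
  have hvolpos : 0 < volSet m U := by
    rw [hvol]
    refine Finset.sum_pos (fun x _ => hm x) ?_
    obtain ⟨x, hx⟩ := hUne
    exact ⟨x, by simpa using hx⟩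
  -- summability of m * u
  have hsum_mu : Summable fun x => m x * u x := by
    by_contra h
    rw [tsum_eq_zero_of_not_summable h] at hmass
    linarith
  -- the finitely supported pieces
  have hsum_mone : Summable fun x => m x * one x :=
    summable_of_ne_finset_zero (s := hUfin.toFinset)
      (fun x hx => by rw [hone_nmem x (by simpa using hx), mul_zero])
  have hsum_muone : Summable fun x => m x * u x * one x :=
    summable_of_ne_finset_zero (s := hUfin.toFinset)
      (fun x hx => by rw [hone_nmem x (by simpa using hx), mul_zero])
  -- key pointwise identity
  have hpt : ∀ x, m x * |one x - u x|
      = (m x * one x + m x * u x) - 2 * (m x * u x * one x) := by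
    intro x
    by_cases hx : x ∈ U
    · rw [hone_mem x hx, abs_of_nonneg (by linarith [hle1 x])]; ring
    · rw [hone_nmem x hx, abs_of_nonpos (by linarith [hpos x])]; ring
  have hsum_add : Summable fun x => m x * one x + m x * u x := hsum_mone.add hsum_mu
  have htsum : (∑' x, m x * |one x - u x|)
      = (∑' x, (m x * one x + m x * u x)) - 2 * ∑' x, m x * u x * one x := by
    calc (∑' x, m x * |one x - u x|)
        = ∑' x, ((m x * one x + m x * u x) - 2 * (m x * u x * one x)) := by
          exact tsum_congr hpt
      _ = (∑' x, (m x * one x + m x * u x)) - ∑' x, 2 * (m x * u x * one x) :=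
          Summable.tsum_sub hsum_add (hsum_muone.mul_left 2)
      _ = (∑' x, (m x * one x + m x * u x)) - 2 * ∑' x, m x * u x * one x := by
          rw [tsum_mul_left]
  have hmone : (∑' x, m x * one x) = volSet m U := by
    unfold volSet
    refine tsum_congr fun x => ?_
    by_cases hx : x ∈ U
    · rw [hone_mem x hx, Set.indicator_of_mem hx]; ring
    · rw [hone_nmem x hx, Set.indicator_of_notMem hx]; ring
  have hsplit : (∑' x, (m x * one x + m x * u x)) = 2 * volSet m U := by
    rw [Summable.tsum_add hsum_mone hsum_mu, hmone, hmass]; ring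
  rw [ge_iff_le, htsum, hsplit]
  have hDGG' : (∑' x, m x * u x * one x) ≤ Real.exp (-lam * t) * volSet m U := hDGG
  nlinarith [hvolpos, hDGG']
end
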